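/- Let V̄ have rank n+1 and let Q : rowspan(V̄) → ℝ be the linear functional defined by Q(V̄^T a) = a · q̄. Let B be a positive spanning set of rowspan(V̄) ∩ ℝ_{≥0}^N, i.e., every element of this cone is a finite nonnegative combination of elements of B. Then (V, q) is coherent if and only if Q(b) ≥ 0 for all b ∈ B. -/

import Mathlib

open scoped BigOperators

def Coherent {n N : ℕ} (V : Fin n → Fin N → ℝ) (q : Fin n → ℝ) : Prop :=
  ∃ π : Fin N → ℝ, (∀ j, 0 ≤ π j) ∧ (∑ j, π j) = 1 ∧ ∀ i, (∑ j, V i j * π j) = q i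

/-- `B` is a positive spanning set of `S`: `B ⊆ S` and every element of `S` is a finite
nonnegative linear combination of elements of `B`. -/
def IsPosSpanning {N : ℕ} (B S : Set (Fin N → ℝ)) : Prop :=
  B ⊆ S ∧ ∀ s ∈ S, ∃ (m : ℕ) (c : Fin m → ℝ) (b : Fin m → (Fin N → ℝ)),
    (∀ k, b k ∈ B) ∧ (∀ k, 0 ≤ c k) ∧ s = ∑ k, c k • b k

/-- when `V̄` (the matrix `V` with a row of ones prepended) has linearly
independent rows, and `B` is a positive spanning set of `rowspan(V̄) ∩ ℝ₊^N`, coherence of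
`(V, q)` is equivalent to `Q(b) ≥ 0` for all `b ∈ B`, where `Q(V̄ᵀ a) = a · q̄`. -/
theorem coherent_iff_nonneg_on_pos_spanning_set
    {n N : ℕ} (V : Fin n → Fin N → ℝ)
    (hV : ∀ i j, V i j = 0 ∨ V i j = 1)
    (q : Fin n → ℝ) (hq : ∀ i, q i ∈ Set.Icc (0:ℝ) 1)
    (Vbar : Fin (n + 1) → Fin N → ℝ) (hVbar : Vbar = Fin.cons (fun _ => (1:ℝ)) V)
    (qbar : Fin (n + 1) → ℝ) (hqbar : qbar = Fin.cons (1:ℝ) q)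
    (hrank : LinearIndependent ℝ Vbar)
    (B : Set (Fin N → ℝ))
    (hB : IsPosSpanning B
      {o | o ∈ Submodule.span ℝ (Set.range Vbar) ∧ ∀ j, 0 ≤ o j}) :
    Coherent V q ↔
      ∀ b ∈ B, ∀ a : Fin (n + 1) → ℝ,
        (∑ i, a i • Vbar i) = b → 0 ≤ ∑ i, a i * qbar i := by
  -- the columns of `Vbar`
  set col : Fin N → (Fin (n + 1) → ℝ) := fun j i => Vbar i j with hcol
  have hVbar0 : ∀ j, Vbar 0 j = 1 := by
    intro j; rw [hVbar]; rfl
  have hVbarsucc : ∀ (i : Fin n) (j), Vbar i.succ j = V i j := by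
    intro i j; rw [hVbar]; rfl
  have hqbar0 : qbar 0 = 1 := by rw [hqbar]; rfl
  have hqbarsucc : ∀ i : Fin n, qbar i.succ = q i := by
    intro i; rw [hqbar]; rfl
  -- coherence is equivalent to `qbar ∈ convexHull (range col)`
  have key : Coherent V q ↔ qbar ∈ convexHull ℝ (Set.range col) := by
    constructor
    · rintro ⟨π, hπ0, hπ1, hπV⟩
      refine mem_convexHull_of_exists_fintype π col hπ0 hπ1 (fun j => ⟨j, rfl⟩) ?_
      funext i
      refine Fin.cases ?_ ?_ i
      · simp only [Finset.sum_apply, Pi.smul_apply, smul_eq_mul, hcol, hVbar0,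
          mul_one, hπ1, hqbar0]
      · intro i
        simp only [Finset.sum_apply, Pi.smul_apply, smul_eq_mul, hcol, hVbarsucc,
          hqbarsucc]
        rw [← hπV i]
        exact Finset.sum_congr rfl fun j _ => mul_comm _ _
    · intro hmem
      obtain ⟨ι, _, w, z, hw0, hw1, hz, hsum⟩ :=
        mem_convexHull_iff_exists_fintype.1 hmem
      choose g hg using hz
      refine ⟨fun j => ∑ i, if g i = j then w i else 0, ?_, ?_, ?_⟩
      · intro j
        exact Finset.sum_nonneg fun i _ => by
          by_cases h' : g i = j <;> simp [h', hw0 i]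
      · rw [Finset.sum_comm]
        rw [← hw1]
        refine Finset.sum_congr rfl fun i _ => by simp
      · intro i'
        have := congrFun hsum i'.succ
        simp only [Finset.sum_apply, Pi.smul_apply, smul_eq_mul] at this
        rw [← hqbarsucc i', ← this]
        simp only [Finset.mul_sum, mul_ite, mul_zero]
        rw [Finset.sum_comm]
        refine Finset.sum_congr rfl fun i _ => ?_
        rw [Finset.sum_ite_eq Finset.univ (g i)]
        simp only [Finset.mem_univ, if_true]
        rw [← hg i]
        simp [hcol, hVbarsucc, mul_comm]
  rw [key]
  constructor
  · -- forward: `qbar ∈ hull` → nonnegativity on `B`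
    intro hmem b hbB a hab
    obtain ⟨π, hπ0, hπ1, hπV⟩ : Coherent V q := key.mpr hmem
    have hqb : ∀ i, qbar i = ∑ j, Vbar i j * π j := by
      intro i
      refine Fin.cases ?_ ?_ i
      · simp only [hVbar0, one_mul, hπ1, hqbar0]
      · intro i; simp only [hVbarsucc, hqbarsucc, hπV i]
    calc (0:ℝ) ≤ ∑ j, b j * π j := by
          refine Finset.sum_nonneg fun j _ => mul_nonneg ?_ (hπ0 j)
          have := (hB.1 hbB).2 j
          exact this
      _ = ∑ i, a i * qbar i := by
          rw [← hab]
          simp only [Finset.sum_apply, Pi.smul_apply, smul_eq_mul, Finset.sum_mul]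
          rw [Finset.sum_comm]
          refine Finset.sum_congr rfl fun i _ => ?_
          rw [hqb i, Finset.mul_sum]
          refine Finset.sum_congr rfl fun j _ => by ring
  · -- backward: nonnegativity on `B` → `qbar ∈ hull`
    intro h
    by_contra hmem
    -- separate `qbar` from the compact convex hull
    have hclosed : IsClosed (convexHull ℝ (Set.range col)) :=
      ((Set.finite_range col).isCompact_convexHull ℝ).isClosed
    obtain ⟨f, u, hfq, hfT⟩ :=
      geometric_hahn_banach_point_closed (convex_convexHull ℝ _) hclosed hmem
    -- represent `f` by coordinates
    set y : Fin (n + 1) → ℝ :=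
      fun i => f (fun j => if i = j then 1 else 0) - (if i = 0 then u else 0) with hy
    have hf : ∀ x : Fin (n + 1) → ℝ,
        ∑ i, x i * y i = f x - u * x 0 := by
      intro x
      have := LinearMap.pi_apply_eq_sum_univ (f : (Fin (n+1) → ℝ) →ₗ[ℝ] ℝ) x
      simp only [ContinuousLinearMap.coe_coe] at this
      simp only [hy, mul_sub, Finset.sum_sub_distrib, smul_eq_mul] at *
      rw [← this]
      congr 1
      simp only [mul_ite, mul_zero, Finset.sum_ite_eq', Finset.mem_univ, if_true]
      ring
    -- the vector `b₀ := Vbarᵀ y` is in the cone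
    set b₀ : Fin N → ℝ := ∑ i, y i • Vbar i with hb₀
    have hb₀j : ∀ j, b₀ j = f (col j) - u := by
      intro j
      have : b₀ j = ∑ i, (col j) i * y i := by
        simp only [hb₀, Finset.sum_apply, Pi.smul_apply, smul_eq_mul, hcol]
        exact Finset.sum_congr rfl fun i _ => mul_comm _ _
      rw [this, hf (col j), hcol]
      simp [hVbar0]
    have hb₀S : b₀ ∈ {o | o ∈ Submodule.span ℝ (Set.range Vbar) ∧ ∀ j, 0 ≤ o j} := by
      constructor
      · exact Submodule.sum_mem _ fun i _ =>
          Submodule.smul_mem _ _ (Submodule.subset_span ⟨i, rfl⟩)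
      · intro j
        rw [hb₀j j]
        have := hfT (col j) (subset_convexHull ℝ _ ⟨j, rfl⟩)
        linarith
    -- decompose `b₀` in terms of `B`
    obtain ⟨m, c, bk, hbkB, hc0, hdecomp⟩ := hB.2 b₀ hb₀S
    -- each `bk k` lies in the row span
    have hrep : ∀ k, ∃ a : Fin (n + 1) → ℝ, ∑ i, a i • Vbar i = bk k := by
      intro k
      have := (hB.1 (hbkB k)).1
      exact (Submodule.mem_span_range_iff_exists_fun ℝ).1 this
    choose A hA using hrep
    -- linear independence forces `y = ∑ k c k • A k`
    have hyA : ∀ i, y i = ∑ k, c k * A k i := by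
      have heq : ∑ i, (y i - ∑ k, c k * A k i) • Vbar i = 0 := by
        have h2 : ∑ i, (∑ k, c k * A k i) • Vbar i = ∑ k, c k • bk k := by
          simp only [Finset.sum_smul]
          rw [Finset.sum_comm]
          refine Finset.sum_congr rfl fun k _ => ?_
          rw [← hA k, Finset.smul_sum]
          exact Finset.sum_congr rfl fun i _ => (smul_smul _ _ _).symm
        simp only [sub_smul, Finset.sum_sub_distrib]
        rw [h2, ← hdecomp, ← hb₀, sub_self]
      have h0 := Fintype.linearIndependent_iff.1 hrank _ heq
      intro i
      have := h0 i
      linarith [this]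
    -- conclude: `∑ i y i * qbar i ≥ 0`, contradicting separation
    have hge : 0 ≤ ∑ i, y i * qbar i := by
      have heq2 : ∑ i, y i * qbar i = ∑ k, c k * ∑ i, A k i * qbar i := by
        simp only [hyA, Finset.sum_mul]
        rw [Finset.sum_comm]
        refine Finset.sum_congr rfl fun k _ => ?_
        rw [Finset.mul_sum]
        exact Finset.sum_congr rfl fun i _ => by ring
      rw [heq2]
      exact Finset.sum_nonneg fun k _ =>
        mul_nonneg (hc0 k) (h (bk k) (hbkB k) (A k) (hA k))
    have hlt : ∑ i, y i * qbar i < 0 := by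
      have := hf qbar
      rw [hqbar0] at this
      rw [show ∑ i, y i * qbar i = ∑ i, qbar i * y i from
        Finset.sum_congr rfl fun i _ => mul_comm _ _, this]
      linarith
    linarith
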